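/- Under the Mallows model, the position of each element has geometrically decaying tails: if σ ∈ S_N is drawn with probability φ^{K_τ(σ₀,σ)}/Z, then Pr(σ(i) = j) ≤ φ^{|j − σ₀(i)|} for all i, j ∈ [N]. -/

import Mathlib

def kendallTau {N : ℕ} (σ₁ σ₂ : Equiv.Perm (Fin N)) : ℕ :=
  (Finset.univ.filter fun p : Fin N × Fin N =>
    p.1 < p.2 ∧ ((σ₁ p.1 < σ₁ p.2 ∧ σ₂ p.2 < σ₂ p.1) ∨
                 (σ₁ p.2 < σ₁ p.1 ∧ σ₂ p.1 < σ₂ p.2))).card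

/-- The Mallows normalization constant. -/
noncomputable def mallowsZ (N : ℕ) (φ : ℝ) (σ₀ : Equiv.Perm (Fin N)) : ℝ :=
  ∑ σ : Equiv.Perm (Fin N), φ ^ kendallTau σ₀ σ

/-- Probability of an event under the Mallows distribution with center `σ₀`. -/
noncomputable def mallowsProb (N : ℕ) (φ : ℝ) (σ₀ : Equiv.Perm (Fin N))
    (E : Equiv.Perm (Fin N) → Prop) [DecidablePred E] : ℝ :=
  (∑ σ ∈ Finset.univ.filter E, φ ^ kendallTau σ₀ σ) / mallowsZ N φ σ₀

namespace MallowsTail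

open Finset Equiv

/-- `kendallTau 1 τ` is the number of inversions of `τ`. -/
lemma kendall_one_eq {N : ℕ} (τ : Equiv.Perm (Fin N)) :
    kendallTau 1 τ = (Finset.univ.filter fun p : Fin N × Fin N =>
      p.1 < p.2 ∧ τ p.2 < τ p.1).card := by
  unfold kendallTau
  congr 1
  apply Finset.filter_congr
  intro p _
  simp only [Equiv.Perm.one_apply]
  constructor
  · rintro ⟨h1, h2⟩
    refine ⟨h1, ?_⟩
    rcases h2 with ⟨_, h⟩ | ⟨h2, _⟩
    · exact h
    · exact absurd h1 (lt_asymm h2)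
  · rintro ⟨h1, h2⟩
    exact ⟨h1, Or.inl ⟨h1, h2⟩⟩

lemma kendallTau_eq_mul_inv {N : ℕ} (σ₀ σ : Equiv.Perm (Fin N)) :
    kendallTau σ₀ σ = kendallTau 1 (σ * σ₀⁻¹) := by
  rw [kendall_one_eq]
  unfold kendallTau
  apply Finset.card_bij (fun p _ =>
    if σ₀ p.1 < σ₀ p.2 then (σ₀ p.1, σ₀ p.2) else (σ₀ p.2, σ₀ p.1))
  · rintro ⟨p1, p2⟩ hp
    simp only [Finset.mem_filter, Finset.mem_univ, true_and] at hp
    obtain ⟨h12, hd⟩ := hp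
    rcases hd with ⟨ha, hb⟩ | ⟨ha, hb⟩
    · rw [if_pos ha]
      rw [Finset.mem_filter]
      simp only [Finset.mem_filter, Finset.mem_univ, true_and, Equiv.Perm.mul_apply,
        Equiv.Perm.inv_def, Equiv.symm_apply_apply]
      exact ⟨ha, hb⟩
    · rw [if_neg (lt_asymm ha)]
      rw [Finset.mem_filter]
      simp only [Finset.mem_filter, Finset.mem_univ, true_and, Equiv.Perm.mul_apply,
        Equiv.Perm.inv_def, Equiv.symm_apply_apply]
      exact ⟨ha, hb⟩
  · rintro ⟨p1, p2⟩ hp ⟨q1, q2⟩ hq h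
    simp only [Finset.mem_filter, Finset.mem_univ, true_and] at hp hq
    dsimp only at h ⊢
    by_cases c1 : σ₀ p1 < σ₀ p2 <;> by_cases c2 : σ₀ q1 < σ₀ q2
    · rw [if_pos c1, if_pos c2] at h
      obtain ⟨e1, e2⟩ := Prod.ext_iff.mp h
      dsimp only at e1 e2
      rw [Prod.ext_iff]
      exact ⟨σ₀.injective e1, σ₀.injective e2⟩
    · rw [if_pos c1, if_neg c2] at h
      obtain ⟨e1, e2⟩ := Prod.ext_iff.mp h
      dsimp only at e1 e2
      have g1 : p1 = q2 := σ₀.injective e1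
      have g2 : p2 = q1 := σ₀.injective e2
      subst g1; subst g2
      exact absurd hp.1 (lt_asymm hq.1)
    · rw [if_neg c1, if_pos c2] at h
      obtain ⟨e1, e2⟩ := Prod.ext_iff.mp h
      dsimp only at e1 e2
      have g1 : p2 = q1 := σ₀.injective e1
      have g2 : p1 = q2 := σ₀.injective e2
      subst g1; subst g2
      exact absurd hp.1 (lt_asymm hq.1)
    · rw [if_neg c1, if_neg c2] at h
      obtain ⟨e1, e2⟩ := Prod.ext_iff.mp h
      dsimp only at e1 e2
      rw [Prod.ext_iff]
      exact ⟨σ₀.injective e2, σ₀.injective e1⟩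
  · rintro ⟨b1, b2⟩ hb
    rw [Finset.mem_filter] at hb
    simp only [Finset.mem_filter, Finset.mem_univ, true_and, Equiv.Perm.mul_apply] at hb
    obtain ⟨hb12, hbt⟩ := hb
    rcases lt_trichotomy (σ₀⁻¹ b1) (σ₀⁻¹ b2) with hc | hc | hc
    · refine ⟨(σ₀⁻¹ b1, σ₀⁻¹ b2), ?_, ?_⟩
      · simp only [Finset.mem_filter, Finset.mem_univ, true_and]
        refine ⟨hc, Or.inl ?_⟩
        simp only [Equiv.Perm.inv_def, Equiv.apply_symm_apply]
        exact ⟨hb12, hbt⟩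
      · simp only [Equiv.Perm.inv_def, Equiv.apply_symm_apply]
        rw [if_pos hb12]
    · exact absurd (congrArg σ₀ hc) (by simp only [Equiv.Perm.inv_def, Equiv.apply_symm_apply]; exact ne_of_lt hb12)
    · refine ⟨(σ₀⁻¹ b2, σ₀⁻¹ b1), ?_, ?_⟩
      · simp only [Finset.mem_filter, Finset.mem_univ, true_and]
        refine ⟨hc, Or.inr ?_⟩
        simp only [Equiv.Perm.inv_def, Equiv.apply_symm_apply]
        exact ⟨hb12, hbt⟩
      · simp only [Equiv.Perm.inv_def, Equiv.apply_symm_apply]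
        rw [if_neg (lt_asymm hb12)]

variable {n : ℕ}

/-- Delete position `a` / value `j` from `τ`. -/
def delPerm (a j : Fin (n + 1)) (τ : Equiv.Perm (Fin (n + 1))) : Equiv.Perm (Fin n) :=
  Equiv.removeNone ((finSuccEquiv' a).symm.trans (τ.trans (finSuccEquiv' j)))

lemma delPerm_apply (a j : Fin (n + 1)) (τ : Equiv.Perm (Fin (n + 1))) (h : τ a = j)
    (p : Fin n) : j.succAbove (delPerm a j τ p) = τ (a.succAbove p) := by
  have hne : τ (a.succAbove p) ≠ j := by
    rw [← h]
    exact fun hc => Fin.succAbove_ne a p (τ.injective hc)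
  obtain ⟨q, hq⟩ := Fin.exists_succAbove_eq hne
  have he : ((finSuccEquiv' a).symm.trans (τ.trans (finSuccEquiv' j))) (some p) = some q := by
    simp only [Equiv.trans_apply, finSuccEquiv'_symm_some, ← hq, finSuccEquiv'_succAbove]
  have h2 := Equiv.removeNone_some _ ⟨q, he⟩
  rw [he] at h2
  have h3 : delPerm a j τ p = q := Option.some_injective _ h2
  rw [h3, hq]

/-- Reinsert the deleted permutation at the top position/value. -/
def FPerm (a j : Fin (n + 1)) (τ : Equiv.Perm (Fin (n + 1))) : Equiv.Perm (Fin (n + 1)) :=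
  (finSuccEquiv' (Fin.last n)).trans
    (((delPerm a j τ).optionCongr).trans (finSuccEquiv' (Fin.last n)).symm)

lemma FPerm_last (a j : Fin (n + 1)) (τ : Equiv.Perm (Fin (n + 1))) :
    FPerm a j τ (Fin.last n) = Fin.last n := by
  simp only [FPerm, Equiv.trans_apply, finSuccEquiv'_at, Equiv.optionCongr_apply,
    Option.map_none, finSuccEquiv'_symm_none]

lemma FPerm_castSucc (a j : Fin (n + 1)) (τ : Equiv.Perm (Fin (n + 1))) (p : Fin n) :
    FPerm a j τ p.castSucc = (delPerm a j τ p).castSucc := by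
  simp only [FPerm, Equiv.trans_apply, finSuccEquiv'_last_apply_castSucc,
    Equiv.optionCongr_apply, Option.map_some, finSuccEquiv'_symm_some, Fin.succAbove_last]

lemma FPerm_injOn (a j : Fin (n + 1)) (τ₁ τ₂ : Equiv.Perm (Fin (n + 1)))
    (h1 : τ₁ a = j) (h2 : τ₂ a = j) (hF : FPerm a j τ₁ = FPerm a j τ₂) : τ₁ = τ₂ := by
  have hdel : ∀ p : Fin n, delPerm a j τ₁ p = delPerm a j τ₂ p := by
    intro p
    have h3 := congrArg (fun f : Equiv.Perm (Fin (n + 1)) => f p.castSucc) hF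
    simp only [FPerm_castSucc] at h3
    exact Fin.castSucc_injective n h3
  apply Equiv.ext
  intro x
  by_cases hx : x = a
  · rw [hx, h1, h2]
  · obtain ⟨p, hp⟩ := Fin.exists_succAbove_eq (Ne.symm (fun hc => hx hc.symm))
    rw [← hp, ← delPerm_apply a j τ₁ h1 p, ← delPerm_apply a j τ₂ h2 p, hdel]

lemma kendall_FPerm (a j : Fin (n + 1)) (τ : Equiv.Perm (Fin (n + 1))) :
    kendallTau 1 (FPerm a j τ) = kendallTau 1 (delPerm a j τ) := by
  rw [kendall_one_eq, kendall_one_eq]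
  symm
  apply Finset.card_bij (fun (p : Fin n × Fin n) _ => (p.1.castSucc, p.2.castSucc))
  · rintro ⟨p1, p2⟩ hp
    simp only [Finset.mem_filter, Finset.mem_univ, true_and] at hp ⊢
    refine ⟨Fin.castSucc_lt_castSucc_iff.mpr hp.1, ?_⟩
    rw [FPerm_castSucc, FPerm_castSucc]
    exact Fin.castSucc_lt_castSucc_iff.mpr hp.2
  · rintro ⟨p1, p2⟩ _ ⟨q1, q2⟩ _ h
    obtain ⟨e1, e2⟩ := Prod.ext_iff.mp h
    rw [Prod.ext_iff]
    exact ⟨Fin.castSucc_injective n e1, Fin.castSucc_injective n e2⟩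
  · rintro ⟨q1, q2⟩ hq
    simp only [Finset.mem_filter, Finset.mem_univ, true_and] at hq
    obtain ⟨hlt, hinv⟩ := hq
    have hq2 : q2 ≠ Fin.last n := by
      rintro rfl
      rw [FPerm_last] at hinv
      exact absurd hinv (not_lt.mpr (Fin.le_last _))
    have hq1 : q1 ≠ Fin.last n := fun hc => absurd (hc ▸ hlt) (not_lt.mpr (Fin.le_last q2))
    obtain ⟨p1, hp1⟩ := Fin.exists_castSucc_eq.mpr hq1
    obtain ⟨p2, hp2⟩ := Fin.exists_castSucc_eq.mpr hq2
    refine ⟨(p1, p2), ?_, by rw [hp1, hp2]⟩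
    simp only [Finset.mem_filter, Finset.mem_univ, true_and]
    constructor
    · rw [← Fin.castSucc_lt_castSucc_iff, hp1, hp2]
      exact hlt
    · rw [← Fin.castSucc_lt_castSucc_iff, ← FPerm_castSucc, ← FPerm_castSucc, hp1, hp2]
      exact hinv

lemma kendall_del (a j : Fin (n + 1)) (τ : Equiv.Perm (Fin (n + 1))) (h : τ a = j) :
    kendallTau 1 (delPerm a j τ) = (Finset.univ.filter fun p : Fin (n + 1) × Fin (n + 1) =>
      (p.1 < p.2 ∧ τ p.2 < τ p.1) ∧ ¬(p.1 = a ∨ p.2 = a)).card := by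
  rw [kendall_one_eq]
  apply Finset.card_bij (fun (p : Fin n × Fin n) _ => (a.succAbove p.1, a.succAbove p.2))
  · rintro ⟨p1, p2⟩ hp
    simp only [Finset.mem_filter, Finset.mem_univ, true_and] at hp ⊢
    obtain ⟨h1, h2⟩ := hp
    refine ⟨⟨Fin.succAbove_lt_succAbove_iff.mpr h1, ?_⟩, ?_⟩
    · rw [← delPerm_apply a j τ h p1, ← delPerm_apply a j τ h p2]
      exact Fin.succAbove_lt_succAbove_iff.mpr h2
    · push_neg
      exact ⟨Fin.succAbove_ne a p1, Fin.succAbove_ne a p2⟩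
  · rintro ⟨p1, p2⟩ _ ⟨q1, q2⟩ _ hpq
    obtain ⟨e1, e2⟩ := Prod.ext_iff.mp hpq
    rw [Prod.ext_iff]
    exact ⟨Fin.succAbove_right_injective e1, Fin.succAbove_right_injective e2⟩
  · rintro ⟨q1, q2⟩ hq
    simp only [Finset.mem_filter, Finset.mem_univ, true_and] at hq
    obtain ⟨⟨h1, h2⟩, h3⟩ := hq
    push_neg at h3
    obtain ⟨p1, hp1⟩ := Fin.exists_succAbove_eq h3.1
    obtain ⟨p2, hp2⟩ := Fin.exists_succAbove_eq h3.2
    refine ⟨(p1, p2), ?_, by rw [hp1, hp2]⟩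
    simp only [Finset.mem_filter, Finset.mem_univ, true_and]
    constructor
    · rw [← Fin.succAbove_lt_succAbove_iff (p := a), hp1, hp2]
      exact h1
    · rw [← Fin.succAbove_lt_succAbove_iff (p := j), delPerm_apply a j τ h,
        delPerm_apply a j τ h, hp1, hp2]
      exact h2

lemma card_pairs_at (a j : Fin (n + 1)) (τ : Equiv.Perm (Fin (n + 1))) (h : τ a = j) :
    (((j : ℕ) : ℤ) - ((a : ℕ) : ℤ)).natAbs ≤
      (Finset.univ.filter fun p : Fin (n + 1) × Fin (n + 1) =>
        (p.1 < p.2 ∧ τ p.2 < τ p.1) ∧ (p.1 = a ∨ p.2 = a)).card := by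
  classical
  set T : Finset (Fin (n + 1)) := Finset.univ.filter
    (fun q => (a < q ∧ τ q < j) ∨ (q < a ∧ j < τ q)) with hT
  have hTle : T.card ≤ (Finset.univ.filter fun p : Fin (n + 1) × Fin (n + 1) =>
      (p.1 < p.2 ∧ τ p.2 < τ p.1) ∧ (p.1 = a ∨ p.2 = a)).card := by
    apply Finset.card_le_card_of_injOn (fun q => if a < q then (a, q) else (q, a))
    · intro q hq
      rw [hT, Finset.mem_coe, Finset.mem_filter] at hq
      rw [Finset.mem_coe]
      beta_reduce
      simp only [hT, Finset.mem_filter, Finset.mem_univ, true_and] at hq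
      rcases hq with ⟨h1, h2⟩ | ⟨h1, h2⟩
      · rw [if_pos h1]
        exact Finset.mem_filter.mpr ⟨Finset.mem_univ _, ⟨h1, by rw [h]; exact h2⟩, Or.inl rfl⟩
      · rw [if_neg (lt_asymm h1)]
        exact Finset.mem_filter.mpr ⟨Finset.mem_univ _, ⟨h1, by rw [h]; exact h2⟩, Or.inr rfl⟩
    · intro q1 hq1 q2 hq2 heq
      simp only [Finset.coe_filter, Set.mem_setOf_eq, Finset.mem_univ, true_and, hT] at hq1 hq2
      dsimp only at heq
      by_cases c1 : a < q1 <;> by_cases c2 : a < q2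
      · rw [if_pos c1, if_pos c2] at heq
        exact (Prod.ext_iff.mp heq).2
      · rw [if_pos c1, if_neg c2] at heq
        obtain ⟨e1, e2⟩ := Prod.ext_iff.mp heq
        dsimp only at e1 e2
        exfalso
        rcases hq2 with ⟨hc, _⟩ | ⟨hc, _⟩
        · exact c2 hc
        · rw [← e1] at hc
          exact lt_irrefl a hc
      · rw [if_neg c1, if_pos c2] at heq
        obtain ⟨e1, e2⟩ := Prod.ext_iff.mp heq
        dsimp only at e1 e2
        exfalso
        rcases hq1 with ⟨hc, _⟩ | ⟨hc, _⟩
        · exact c1 hc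
        · rw [e1] at hc
          exact lt_irrefl a hc
      · rw [if_neg c1, if_neg c2] at heq
        exact (Prod.ext_iff.mp heq).1
  refine le_trans ?_ hTle
  rcases le_or_gt a j with haj | hja
  · -- case a ≤ j : use values below j
    have hcards : (Finset.univ.filter fun q : Fin (n + 1) => τ q < j).card = (j : ℕ) := by
      rw [← Fin.card_Iio (b := j)]
      apply Finset.card_bij (fun q _ => τ q)
      · intro q hq
        simp only [Finset.mem_filter, Finset.mem_univ, true_and] at hq
        simpa only [Finset.mem_Iio] using hq
      · intro q1 _ q2 _ hq
        exact τ.injective hq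
      · intro v hv
        simp only [Finset.mem_Iio] at hv
        exact ⟨τ.symm v, by simp only [Finset.mem_filter, Finset.mem_univ, true_and,
          Equiv.apply_symm_apply]; exact hv, by simp⟩
    have hsub : (Finset.univ.filter fun q : Fin (n + 1) => τ q < j) ⊆
        (Finset.univ.filter fun q : Fin (n + 1) => a < q ∧ τ q < j) ∪ Finset.Iio a := by
      intro q hq
      simp only [Finset.mem_filter, Finset.mem_univ, true_and, Finset.mem_union,
        Finset.mem_Iio] at hq ⊢
      rcases lt_trichotomy a q with hc | hc | hc
      · exact Or.inl ⟨hc, hq⟩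
      · exfalso
        rw [← hc, h] at hq
        exact lt_irrefl _ hq
      · exact Or.inr hc
    have hc1 := Finset.card_le_card hsub
    have hc2 := Finset.card_union_le
      (Finset.univ.filter fun q : Fin (n + 1) => a < q ∧ τ q < j) (Finset.Iio a)
    have hc3 : (Finset.univ.filter fun q : Fin (n + 1) => a < q ∧ τ q < j) ⊆ T := by
      intro q hq
      simp only [Finset.mem_filter, Finset.mem_univ, true_and, hT] at hq ⊢
      exact Or.inl hq
    have hc4 := Finset.card_le_card hc3
    have hIa : (Finset.Iio a).card = (a : ℕ) := Fin.card_Iio a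
    have haj' : (a : ℕ) ≤ (j : ℕ) := haj
    omega
  · -- case j < a : use values above j
    have hcards : (Finset.univ.filter fun q : Fin (n + 1) => j < τ q).card = n - (j : ℕ) := by
      have : (Finset.univ.filter fun q : Fin (n + 1) => j < τ q).card = (Finset.Ioi j).card := by
        apply Finset.card_bij (fun q _ => τ q)
        · intro q hq
          simp only [Finset.mem_filter, Finset.mem_univ, true_and] at hq
          simpa only [Finset.mem_Ioi] using hq
        · intro q1 _ q2 _ hq
          exact τ.injective hq
        · intro v hv
          simp only [Finset.mem_Ioi] at hv
          exact ⟨τ.symm v, by simp only [Finset.mem_filter, Finset.mem_univ, true_and,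
            Equiv.apply_symm_apply]; exact hv, by simp⟩
      rw [this, Fin.card_Ioi]
      omega
    have hsub : (Finset.univ.filter fun q : Fin (n + 1) => j < τ q) ⊆
        (Finset.univ.filter fun q : Fin (n + 1) => q < a ∧ j < τ q) ∪ Finset.Ioi a := by
      intro q hq
      simp only [Finset.mem_filter, Finset.mem_univ, true_and, Finset.mem_union,
        Finset.mem_Ioi] at hq ⊢
      rcases lt_trichotomy q a with hc | hc | hc
      · exact Or.inl ⟨hc, hq⟩
      · exfalso
        rw [hc, h] at hq
        exact lt_irrefl _ hq
      · exact Or.inr hc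
    have hc1 := Finset.card_le_card hsub
    have hc2 := Finset.card_union_le
      (Finset.univ.filter fun q : Fin (n + 1) => q < a ∧ j < τ q) (Finset.Ioi a)
    have hc3 : (Finset.univ.filter fun q : Fin (n + 1) => q < a ∧ j < τ q) ⊆ T := by
      intro q hq
      simp only [Finset.mem_filter, Finset.mem_univ, true_and, hT] at hq ⊢
      exact Or.inr hq
    have hc4 := Finset.card_le_card hc3
    have hIa : (Finset.Ioi a).card = n + 1 - 1 - (a : ℕ) := Fin.card_Ioi a
    have hja' : (j : ℕ) < (a : ℕ) := hja
    have hjn : (j : ℕ) ≤ n := Fin.is_le j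
    have han : (a : ℕ) ≤ n := Fin.is_le a
    omega

lemma key_ineq (a j : Fin (n + 1)) (τ : Equiv.Perm (Fin (n + 1))) (h : τ a = j) :
    kendallTau 1 (FPerm a j τ) + (((j : ℕ) : ℤ) - ((a : ℕ) : ℤ)).natAbs ≤ kendallTau 1 τ := by
  classical
  rw [kendall_FPerm, kendall_del a j τ h, kendall_one_eq]
  have hD := card_pairs_at a j τ h
  set S1 := Finset.univ.filter (fun p : Fin (n + 1) × Fin (n + 1) =>
    (p.1 < p.2 ∧ τ p.2 < τ p.1) ∧ (p.1 = a ∨ p.2 = a)) with hS1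
  set S2 := Finset.univ.filter (fun p : Fin (n + 1) × Fin (n + 1) =>
    (p.1 < p.2 ∧ τ p.2 < τ p.1) ∧ ¬(p.1 = a ∨ p.2 = a)) with hS2
  have hdisj : Disjoint S1 S2 := by
    rw [Finset.disjoint_left]
    intro p hp1 hp2
    simp only [hS1, hS2, Finset.mem_filter] at hp1 hp2
    exact hp2.2.2 hp1.2.2
  have hsub : S1 ∪ S2 ⊆ Finset.univ.filter
      (fun p : Fin (n + 1) × Fin (n + 1) => p.1 < p.2 ∧ τ p.2 < τ p.1) := by
    intro p hp
    rcases Finset.mem_union.mp hp with hp | hp <;>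
      simp only [hS1, hS2, Finset.mem_filter] at hp <;>
      simp only [Finset.mem_filter] <;> exact ⟨hp.1, hp.2.1⟩
  have hcard : S1.card + S2.card ≤ (Finset.univ.filter
      (fun p : Fin (n + 1) × Fin (n + 1) => p.1 < p.2 ∧ τ p.2 < τ p.1)).card := by
    rw [← Finset.card_union_of_disjoint hdisj]
    exact Finset.card_le_card hsub
  omega

lemma slice_le (φ : ℝ) (hφ0 : 0 < φ) (hφ1 : φ < 1) (a j : Fin (n + 1)) :
    (∑ τ ∈ Finset.univ.filter (fun τ : Equiv.Perm (Fin (n + 1)) => τ a = j),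
        φ ^ kendallTau 1 τ) ≤
      φ ^ (((j : ℕ) : ℤ) - ((a : ℕ) : ℤ)).natAbs *
        ∑ τ : Equiv.Perm (Fin (n + 1)), φ ^ kendallTau 1 τ := by
  classical
  set d := (((j : ℕ) : ℤ) - ((a : ℕ) : ℤ)).natAbs with hd
  calc (∑ τ ∈ Finset.univ.filter (fun τ : Equiv.Perm (Fin (n + 1)) => τ a = j),
        φ ^ kendallTau 1 τ)
      ≤ ∑ τ ∈ Finset.univ.filter (fun τ : Equiv.Perm (Fin (n + 1)) => τ a = j),
        φ ^ (d + kendallTau 1 (FPerm a j τ)) := by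
        apply Finset.sum_le_sum
        intro τ hτ
        simp only [Finset.mem_filter, Finset.mem_univ, true_and] at hτ
        apply pow_le_pow_of_le_one hφ0.le hφ1.le
        have := key_ineq a j τ hτ
        omega
    _ = φ ^ d * ∑ τ ∈ Finset.univ.filter (fun τ : Equiv.Perm (Fin (n + 1)) => τ a = j),
        φ ^ kendallTau 1 (FPerm a j τ) := by
        rw [Finset.mul_sum]
        apply Finset.sum_congr rfl
        intro τ _
        rw [pow_add]
    _ ≤ φ ^ d * ∑ τ : Equiv.Perm (Fin (n + 1)), φ ^ kendallTau 1 τ := by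
        apply mul_le_mul_of_nonneg_left _ (pow_nonneg hφ0.le d)
        have himg : (∑ τ ∈ Finset.univ.filter
            (fun τ : Equiv.Perm (Fin (n + 1)) => τ a = j), φ ^ kendallTau 1 (FPerm a j τ))
            = ∑ ρ ∈ (Finset.univ.filter
              (fun τ : Equiv.Perm (Fin (n + 1)) => τ a = j)).image (FPerm a j),
              φ ^ kendallTau 1 ρ := by
          rw [Finset.sum_image]
          intro τ₁ h1 τ₂ h2 heq
          have h1 : τ₁ a = j := by simpa using h1
          have h2 : τ₂ a = j := by simpa using h2
          exact FPerm_injOn a j τ₁ τ₂ h1 h2 heq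
        rw [himg]
        apply Finset.sum_le_sum_of_subset_of_nonneg (Finset.subset_univ _)
        intro ρ _ _
        exact pow_nonneg hφ0.le _

end MallowsTail

theorem mallows_position_geometric_tail (N : ℕ) (φ : ℝ)
    (hφ0 : 0 < φ) (hφ1 : φ < 1) (σ₀ : Equiv.Perm (Fin N)) (i j : Fin N) :
    mallowsProb N φ σ₀ (fun σ => σ i = j) ≤
      φ ^ (((j : ℤ) - ((σ₀ i : ℕ) : ℤ)).natAbs) := by
  classical
  obtain ⟨n, rfl⟩ : ∃ n, N = n + 1 := ⟨N - 1, (Nat.succ_pred_eq_of_pos i.pos).symm⟩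
  have hZ : 0 < mallowsZ (n + 1) φ σ₀ :=
    Finset.sum_pos (fun σ _ => pow_pos hφ0 _) Finset.univ_nonempty
  rw [mallowsProb, div_le_iff₀ hZ]
  have hZ2 : mallowsZ (n + 1) φ σ₀ = ∑ τ : Equiv.Perm (Fin (n + 1)), φ ^ kendallTau 1 τ := by
    rw [mallowsZ]
    apply Fintype.sum_equiv (Equiv.mulRight σ₀⁻¹)
    intro σ
    rw [MallowsTail.kendallTau_eq_mul_inv]
    rfl
  have hslice : (∑ σ ∈ Finset.univ.filter (fun σ : Equiv.Perm (Fin (n + 1)) => σ i = j),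
      φ ^ kendallTau σ₀ σ)
      = ∑ τ ∈ Finset.univ.filter (fun τ : Equiv.Perm (Fin (n + 1)) => τ (σ₀ i) = j),
        φ ^ kendallTau 1 τ := by
    rw [Finset.sum_filter, Finset.sum_filter]
    apply Fintype.sum_equiv (Equiv.mulRight σ₀⁻¹)
    intro σ
    have h1 : (σ * σ₀⁻¹) (σ₀ i) = σ i := by
      simp [Equiv.Perm.mul_apply]
    simp only [Equiv.coe_mulRight, h1, MallowsTail.kendallTau_eq_mul_inv σ₀ σ]
  rw [hslice, hZ2]
  exact MallowsTail.slice_le φ hφ0 hφ1 (σ₀ i) j
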